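/- Under the two-modality linear-Gaussian setup, for every β ∈ [0,1], the matrix K_β + K_c is negative definite. -/

import Mathlib

open Matrix MeasureTheory

private lemma smul_one_inv {n : ℕ} {c : ℝ} (hc : c ≠ 0) :
    (c • (1 : Matrix (Fin n) (Fin n) ℝ))⁻¹ = c⁻¹ • 1 := by
  apply Matrix.inv_eq_right_inv
  rw [Matrix.smul_mul, Matrix.mul_smul, smul_smul, mul_inv_cancel₀ hc, one_mul, one_smul]

private lemma psd_smul {n : ℕ} {c : ℝ} (hc : 0 ≤ c) {M : Matrix (Fin n) (Fin n) ℝ}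
    (hM : M.PosSemidef) : (c • M).PosSemidef := by
  refine Matrix.posSemidef_iff_dotProduct_mulVec.mpr ⟨?_, fun x => ?_⟩
  · unfold Matrix.IsHermitian
    rw [Matrix.conjTranspose_smul, hM.1]
    simp
  · rw [Matrix.smul_mulVec, dotProduct_smul, smul_eq_mul]
    exact mul_nonneg hc ((Matrix.posSemidef_iff_dotProduct_mulVec.mp hM).2 x)

private lemma psd_WtW {n m : ℕ} (A : Matrix (Fin m) (Fin n) ℝ) : (Aᵀ * A).PosSemidef := by
  have := Matrix.posSemidef_conjTranspose_mul_self A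
  rwa [Matrix.conjTranspose_eq_transpose_of_trivial] at this

private lemma key_inv {n : ℕ} {M : Matrix (Fin n) (Fin n) ℝ} (hM : M.PosSemidef) :
    (M + 1)⁻¹ * M - 1 = -(M + 1)⁻¹ := by
  have hpd : (M + 1).PosDef := Matrix.PosDef.posSemidef_add hM Matrix.PosDef.one
  have hinv : (M + 1)⁻¹ * (M + 1) = 1 :=
    Matrix.nonsing_inv_mul _ hpd.det_pos.ne'.isUnit
  calc (M + 1)⁻¹ * M - 1 = (M + 1)⁻¹ * M - (M + 1)⁻¹ * (M + 1) := by rw [hinv]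
    _ = -(M + 1)⁻¹ := by rw [Matrix.mul_add]; rw [Matrix.mul_one]; abel

theorem stmt_7    (d p q : ℕ) (hd : 0 < d) (hp : 0 < p) (hq : 0 < q)
    (Wx : Matrix (Fin p) (Fin d) ℝ) (Wy : Matrix (Fin q) (Fin d) ℝ)
    (σx σy : ℝ) (hσx : 0 < σx) (hσy : 0 < σy)
    (β : ℝ) (hβ : β ∈ Set.Icc (0 : ℝ) 1) :
    let Ψx : Matrix (Fin p) (Fin p) ℝ := σx ^ 2 • (1 : Matrix (Fin p) (Fin p) ℝ)
    let Ψy : Matrix (Fin q) (Fin q) ℝ := σy ^ 2 • (1 : Matrix (Fin q) (Fin q) ℝ)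
    let W : Matrix (Fin p ⊕ Fin q) (Fin d) ℝ := Matrix.fromRows Wx Wy
    let Ψ : Matrix (Fin p ⊕ Fin q) (Fin p ⊕ Fin q) ℝ := Matrix.fromBlocks Ψx 0 0 Ψy
    let Gx : Matrix (Fin d) (Fin p) ℝ := (Wxᵀ * Ψx⁻¹ * Wx + 1)⁻¹ * Wxᵀ * Ψx⁻¹
    let Gy : Matrix (Fin d) (Fin q) ℝ := (Wyᵀ * Ψy⁻¹ * Wy + 1)⁻¹ * Wyᵀ * Ψy⁻¹
    let Gβ : Matrix (Fin d) (Fin p ⊕ Fin q) ℝ := Matrix.fromCols (β • Gx) ((1 - β) • Gy)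
    let Gc : Matrix (Fin d) (Fin p ⊕ Fin q) ℝ := (Wᵀ * Ψ⁻¹ * W + 1)⁻¹ * Wᵀ * Ψ⁻¹
    let Kβ : Matrix (Fin d) (Fin d) ℝ := Gβ * W - 1
    let Kc : Matrix (Fin d) (Fin d) ℝ := Gc * W - 1
    (-(Kβ + Kc)).PosDef := by
  intro Ψx Ψy W Ψ Gx Gy Gβ Gc Kβ Kc
  obtain ⟨hβ0, hβ1⟩ := hβ
  have hσx2 : (σx : ℝ) ^ 2 ≠ 0 := by positivity
  have hσy2 : (σy : ℝ) ^ 2 ≠ 0 := by positivity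
  set Ax : Matrix (Fin d) (Fin d) ℝ := Wxᵀ * Ψx⁻¹ * Wx with hAx
  set Ay : Matrix (Fin d) (Fin d) ℝ := Wyᵀ * Ψy⁻¹ * Wy with hAy
  -- positivity of the blocks
  have hΨxinv : Ψx⁻¹ = (σx ^ 2)⁻¹ • 1 := smul_one_inv hσx2
  have hΨyinv : Ψy⁻¹ = (σy ^ 2)⁻¹ • 1 := smul_one_inv hσy2
  have hAxpsd : Ax.PosSemidef := by
    rw [hAx, hΨxinv, Matrix.mul_smul, Matrix.mul_one, Matrix.smul_mul]
    exact psd_smul (by positivity) (psd_WtW Wx)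
  have hAypsd : Ay.PosSemidef := by
    rw [hAy, hΨyinv, Matrix.mul_smul, Matrix.mul_one, Matrix.smul_mul]
    exact psd_smul (by positivity) (psd_WtW Wy)
  -- Ψ⁻¹ as a block matrix
  have hΨinv : Ψ⁻¹ = Matrix.fromBlocks Ψx⁻¹ 0 0 Ψy⁻¹ := by
    apply Matrix.inv_eq_right_inv
    rw [Matrix.fromBlocks_multiply]
    simp only [Matrix.mul_zero, Matrix.zero_mul, add_zero, zero_add]
    rw [Matrix.mul_nonsing_inv _ (by simp [Ψx, Matrix.det_smul, hσx2]),
        Matrix.mul_nonsing_inv _ (by simp [Ψy, Matrix.det_smul, hσy2])]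
    simp [Matrix.fromBlocks_one]
  -- W'Ψ⁻¹W = Ax + Ay
  have hWt : Wᵀ = Matrix.fromCols Wxᵀ Wyᵀ := Matrix.transpose_fromRows Wx Wy
  have hWPW : Wᵀ * Ψ⁻¹ * W = Ax + Ay := by
    rw [hWt, hΨinv, Matrix.fromCols_mul_fromBlocks]
    simp only [Matrix.mul_zero, add_zero, zero_add]
    rw [Matrix.fromCols_mul_fromRows, hAx, hAy]
  -- compute Kc
  have hKc : Kc = -(Ax + Ay + 1)⁻¹ := by
    show (Wᵀ * Ψ⁻¹ * W + 1)⁻¹ * Wᵀ * Ψ⁻¹ * W - 1 = -(Ax + Ay + 1)⁻¹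
    rw [Matrix.mul_assoc, Matrix.mul_assoc, ← Matrix.mul_assoc Wᵀ, hWPW]
    exact key_inv (hAxpsd.add hAypsd)
  -- compute Kβ
  have hGxWx : Gx * Wx = (Ax + 1)⁻¹ * Ax := by
    show (Ax + 1)⁻¹ * Wxᵀ * Ψx⁻¹ * Wx = _
    rw [Matrix.mul_assoc, Matrix.mul_assoc, ← Matrix.mul_assoc Wxᵀ, ← hAx]
  have hGyWy : Gy * Wy = (Ay + 1)⁻¹ * Ay := by
    show (Ay + 1)⁻¹ * Wyᵀ * Ψy⁻¹ * Wy = _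
    rw [Matrix.mul_assoc, Matrix.mul_assoc, ← Matrix.mul_assoc Wyᵀ, ← hAy]
  have hKβ : Kβ = -(β • (Ax + 1)⁻¹ + (1 - β) • (Ay + 1)⁻¹) := by
    show Matrix.fromCols (β • Gx) ((1 - β) • Gy) * Matrix.fromRows Wx Wy - 1 = _
    rw [Matrix.fromCols_mul_fromRows, Matrix.smul_mul, Matrix.smul_mul, hGxWx, hGyWy]
    have h1 : (Ax + 1)⁻¹ * Ax = -(Ax + 1)⁻¹ + 1 := by
      have := key_inv hAxpsd; linear_combination (norm := module) this
    have h2 : (Ay + 1)⁻¹ * Ay = -(Ay + 1)⁻¹ + 1 := by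
      have := key_inv hAypsd; linear_combination (norm := module) this
    rw [h1, h2]
    module
  rw [hKβ, hKc]
  have heq : -(-(β • (Ax + 1)⁻¹ + (1 - β) • (Ay + 1)⁻¹) + -(Ax + Ay + 1)⁻¹)
      = β • (Ax + 1)⁻¹ + (1 - β) • (Ay + 1)⁻¹ + (Ax + Ay + 1)⁻¹ := by module
  rw [heq]
  have hx1 : (Ax + 1).PosDef := Matrix.PosDef.posSemidef_add hAxpsd Matrix.PosDef.one
  have hy1 : (Ay + 1).PosDef := Matrix.PosDef.posSemidef_add hAypsd Matrix.PosDef.one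
  have hc1 : (Ax + Ay + 1).PosDef :=
    Matrix.PosDef.posSemidef_add (hAxpsd.add hAypsd) Matrix.PosDef.one
  exact Matrix.PosDef.posSemidef_add
    ((psd_smul hβ0 hx1.inv.posSemidef).add (psd_smul (by linarith) hy1.inv.posSemidef))
    hc1.inv
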